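/- Let $\mathcal{G}$ be an ultragraph with no sinks satisfying Condition (RFUM), let $M:\mathcal{G}^1\to[0,1]$, let $m:\mathcal{G}^0\to[0,1]$ satisfy: (m2') $m(A)=\sum_{e:s(e)\in A}M(e)m(r(e))$ whenever $|\varepsilon(A)|<\infty$; (m3') $m(A)\geq\sum_{e\in F}M(e)m(r(e))$ for every finite $F\subseteq\varepsilon(A)$; and (m4') $m(A\cup B)=m(A)+m(B)-m(A\cap B)$ for $A,B\in\mathcal{G}^0$. Extend $M$ multiplicatively to finite paths and define $\kappa(D_{(\beta,B),F})=M(\beta)m(B)-\sum_{e\in F}M(\beta e)m(r(e))$ on the semi-ring $S$ of cylinder sets, with $\kappa(\emptyset)=0$. Then $\kappa$ is finitely additive on $S$: if a cylinder $D_{(\beta,B),F}\in S$ is a finite disjoint union $\bigsqcup_{i=1}^n D_{(\beta_i,B_i),F_i}$ of elements of $S$, then $\kappa(D_{(\beta,B),F})=\sum_{i=1}^n\kappa(D_{(\beta_i,B_i),F_i})$. -/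

import Mathlib

structure Ultragraph (V E : Type*) where
  s : E → V
  r : E → Set V
  r_nonempty : ∀ e, (r e).Nonempty

namespace Ultragraph

variable {V E : Type*}

inductive G0 (G : Ultragraph V E) : Set V → Prop
  | empty : G0 G ∅
  | vertex (v : V) : G0 G {v}
  | range (e : E) : G0 G (G.r e)
  | union {A B : Set V} : G0 G A → G0 G B → G0 G (A ∪ B)
  | inter {A B : Set V} : G0 G A → G0 G B → (A ∩ B).Nonempty → G0 G (A ∩ B)

variable (G : Ultragraph V E)

def eps (A : Set V) : Set E := {e | G.s e ∈ A}

def IsInfiniteEmitter (A : Set V) : Prop := (G.eps A).Infinite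

def IsMinimalInfiniteEmitter (A : Set V) : Prop :=
  G.G0 A ∧ G.IsInfiniteEmitter A ∧
    ∀ B : Set V, G.G0 B → B ⊆ A → G.IsInfiniteEmitter B → B = A

def NoSinks : Prop := ∀ v : V, ∃ e : E, G.s e = v

def RFUM : Prop := ∀ e : E, ∃ (n : ℕ) (A : Fin n → Set V),
  G.r e = ⋃ i, A i ∧ ∀ i, G.IsMinimalInfiniteEmitter (A i) ∨ ∃ v, A i = {v}

/-- A finite path: a list of edges such that the source of each edge lies in the range of
the previous one. -/
def IsPath (l : List E) : Prop := l.Chain' (fun e f => G.s f ∈ G.r e)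

/-- An ultrapath `(β, B)`: a finite path `β` together with `B ∈ G⁰`, `B ⊆ r(β)`
(no constraint beyond `B ∈ G⁰` when `β` has length zero). -/
def IsUPath (β : List E) (B : Set V) : Prop :=
  G.IsPath β ∧ G.G0 B ∧ B.Nonempty ∧ ∀ h : β ≠ [], B ⊆ G.r (β.getLast h)

/-- Points of the shift space: finite ultrapaths `(β, A)` or infinite paths. -/
inductive Pt (V E : Type*) where
  | fin (β : List E) (A : Set V) : Pt V E
  | inf (γ : ℕ → E) : Pt V E

/-- Membership in the shift space `X = X_fin ∪ 𝔭^∞`: a pair `(β, A)` with `A` a minimal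
infinite emitter in `r(β)`, or an infinite path. -/
def IsPt : Pt V E → Prop
  | .fin β A => G.IsPath β ∧ G.IsMinimalInfiniteEmitter A ∧
      ∀ h : β ≠ [], A ⊆ G.r (β.getLast h)
  | .inf γ => ∀ n, G.s (γ (n + 1)) ∈ G.r (γ n)

/-- The shift space `X` associated to the ultragraph. -/
def SSp := {x : Pt V E // G.IsPt x}

/-- Membership in the cylinder `D_{(β,B)}`. -/
def inD (β : List E) (B : Set V) : Pt V E → Prop
  | .fin β' A' => (β' = β ∧ A' ⊆ B) ∨
      (β'.take β.length = β ∧ ∃ e, (β'.drop β.length).head? = some e ∧ G.s e ∈ B)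
  | .inf γ => (∀ i : Fin β.length, γ i = β.get i) ∧ G.s (γ β.length) ∈ B

/-- Membership in the cylinder `D_{(β,B),F}`. -/
def inDF (β : List E) (B : Set V) (F : Set E) : Pt V E → Prop
  | .fin β' A' => (β' = β ∧ A' = B) ∨
      (β'.take β.length = β ∧ ∃ e, (β'.drop β.length).head? = some e ∧
        G.s e ∈ B ∧ e ∉ F)
  | .inf γ => (∀ i : Fin β.length, γ i = β.get i) ∧ G.s (γ β.length) ∈ B ∧
      γ β.length ∉ F

/-- The cylinder set `D_{(β,B)} ⊆ X`. -/
def D (β : List E) (B : Set V) : Set G.SSp := {x | G.inD β B x.val}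

/-- The cylinder set `D_{(β,B),F} ⊆ X`. -/
def DF (β : List E) (B : Set V) (F : Set E) : Set G.SSp := {x | G.inDF β B F x.val}

/-- The set `X_A = {x ∈ X : s(x) ⊆ A}` (for length-zero points) resp. `s(x) ∈ A`. -/
def inXA (A : Set V) : Pt V E → Prop
  | .fin [] B => B ⊆ A
  | .fin (e :: _) _ => G.s e ∈ A
  | .inf γ => G.s (γ 0) ∈ A

def XA (A : Set V) : Set G.SSp := {x | G.inXA A x.val}

/-- The topology on `X`, generated by the cylinder sets. -/
instance : TopologicalSpace G.SSp :=
  TopologicalSpace.generateFrom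
    ({C | ∃ β B, G.IsUPath β B ∧ C = G.D β B} ∪
      {C | ∃ β B F, G.IsUPath β B ∧ G.IsMinimalInfiniteEmitter B ∧
        F ⊆ G.eps B ∧ F.Finite ∧ C = G.DF β B F})

instance : MeasurableSpace G.SSp := borel G.SSp

instance : BorelSpace G.SSp := ⟨rfl⟩

/-- The semi-ring `S` of cylinder sets: the empty set, the sets `D_{(β,B),F}` with
`(β,B) ∈ X_fin` and `F ⊆ ε(B)` finite, and the sets `D_{(α,A)}` with `(α,A) ∈ 𝔭` and
`ε(A)` finite. -/
def cylSR : Set (Set G.SSp) :=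
  {∅} ∪
    {C | ∃ β B F, G.IsUPath β B ∧ G.IsMinimalInfiniteEmitter B ∧
      F ⊆ G.eps B ∧ F.Finite ∧ C = G.DF β B F} ∪
    {C | ∃ β B, G.IsUPath β B ∧ (G.eps B).Finite ∧ C = G.D β B}

/-- Prepending an edge to a point of the shift space (the raw map underlying `θ_e`). -/
def prep (e : E) : Pt V E → Pt V E
  | .fin β A => .fin (e :: β) A
  | .inf γ => .inf (fun n => match n with | 0 => e | k + 1 => γ k)

/-- The image `θ_e(W)` of `W ⊆ X_{e⁻¹}` under the partial homeomorphism `θ_e`. -/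
def thetaImg (e : E) (W : Set G.SSp) : Set G.SSp :=
  {x | ∃ y ∈ W, x.val = prep e y.val}

end Ultragraph

namespace Ultragraph

variable {V E : Type*} (G : Ultragraph V E)

/-- The multiplicative extension of `M : 𝒢¹ → [0,1]` to finite paths. -/
def Mext (M : E → ℝ) (l : List E) : ℝ := (l.map M).prod

/-- The premeasure `κ(D_{(β,B),F}) = M(β) m(B) − ∑_{e ∈ F} M(βe) m(r(e))`. -/
def kappaForm (M : E → ℝ) (m : Set V → ℝ) (β : List E) (B : Set V) (F : Finset E) : ℝ :=
  Mext M β * m B - ∑ e ∈ F, Mext M β * M e * m (G.r e)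

/-- `(β,B,F)` defines an element of the semi-ring `S` of generalized cylinder sets. -/
def ValidCyl (β : List E) (B : Set V) (F : Finset E) : Prop :=
  G.IsUPath β B ∧
    ((G.IsMinimalInfiniteEmitter B ∧ (F : Set E) ⊆ G.eps B) ∨
      ((G.eps B).Finite ∧ F = ∅))

end Ultragraph
namespace Stmt7Aux

open ENNReal
open scoped Classical

noncomputable section

variable {V E : Type*}

/-- product of `M'` along a list -/
def MM (M' : E → ℝ≥0∞) (l : List E) : ℝ≥0∞ := (l.map M').prod

@[simp] lemma MM_nil (M' : E → ℝ≥0∞) : MM M' ([] : List E) = 1 := rfl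

@[simp] lemma MM_concat (M' : E → ℝ≥0∞) (l : List E) (e : E) :
    MM M' (l ++ [e]) = MM M' l * M' e := by
  simp [MM]

variable (G : Ultragraph V E) (M' : E → ℝ≥0∞) (m' : Set V → ℝ≥0∞)

/-- the sum `∑_{e ∈ ε(A)} M'(e) m'(r e)` -/
def mhat (A : Set V) : ℝ≥0∞ :=
  ∑' e : E, if e ∈ G.eps A then M' e * m' (G.r e) else 0

/-- the defect `d(A) = m'(A) - ∑_{e ∈ ε(A)} M'(e) m'(r e)` -/
def dd (A : Set V) : ℝ≥0∞ := m' A - mhat G M' m' A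

/-- range of the last edge of a list -/
def rlast (α : List E) : Set V :=
  match α.getLast? with
  | some e => G.r e
  | none => ∅

@[simp] lemma rlast_concat (α : List E) (e : E) : rlast G (α ++ [e]) = G.r e := by
  simp [rlast]

lemma rlast_of_ne_nil {α : List E} (h : α ≠ []) : rlast G α = G.r (α.getLast h) := by
  simp [rlast, List.getLast?_eq_getLast h]

section ddlemmas

variable (hm3 : ∀ A, G.G0 A → ∀ F : Finset E, (F : Set E) ⊆ G.eps A →
      ∑ e ∈ F, M' e * m' (G.r e) ≤ m' A)

lemma G0_inter {A B : Set V} (hA : G.G0 A) (hB : G.G0 B) : G.G0 (A ∩ B) := by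
  by_cases h : (A ∩ B).Nonempty
  · exact Ultragraph.G0.inter hA hB h
  · rw [Set.not_nonempty_iff_eq_empty] at h
    rw [h]; exact Ultragraph.G0.empty

include hm3 in
lemma mhat_le {A : Set V} (hA : G.G0 A) : mhat G M' m' A ≤ m' A := by
  rw [mhat]
  rw [ENNReal.tsum_eq_iSup_sum]
  refine iSup_le ?_
  intro s
  have h1 : ∑ e ∈ s, (if e ∈ G.eps A then M' e * m' (G.r e) else 0)
      = ∑ e ∈ s.filter (fun e => e ∈ G.eps A), M' e * m' (G.r e) := by
    rw [Finset.sum_filter]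
  rw [h1]
  refine hm3 A hA _ ?_
  intro e he
  simp only [Finset.coe_filter, Set.mem_setOf_eq] at he
  exact he.2

include hm3 in
lemma m'_eq_mhat_add_dd {A : Set V} (hA : G.G0 A) :
    m' A = mhat G M' m' A + dd G M' m' A :=
  (add_tsub_cancel_of_le (mhat_le G M' m' hm3 hA)).symm

variable (hm2 : ∀ A, G.G0 A → ∀ hfin : (G.eps A).Finite,
      m' A = ∑ e ∈ hfin.toFinset, M' e * m' (G.r e))

include hm2 in
lemma mhat_of_finite {A : Set V} (hA : G.G0 A) (hfin : (G.eps A).Finite) :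
    mhat G M' m' A = m' A := by
  rw [mhat, hm2 A hA hfin]
  rw [tsum_eq_sum (s := hfin.toFinset) (fun e he => by
    rw [if_neg]; intro hmem; exact he (hfin.mem_toFinset.2 hmem))]
  refine Finset.sum_congr rfl (fun e he => ?_)
  rw [if_pos (hfin.mem_toFinset.1 he)]

include hm2 in
lemma dd_of_finite {A : Set V} (hA : G.G0 A) (hfin : (G.eps A).Finite) :
    dd G M' m' A = 0 := by
  rw [dd, mhat_of_finite G M' m' hm2 hA hfin, tsub_self]

lemma mhat_union (A B : Set V) :
    mhat G M' m' (A ∪ B) + mhat G M' m' (A ∩ B) = mhat G M' m' A + mhat G M' m' B := by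
  rw [mhat, mhat, mhat, mhat, ← ENNReal.tsum_add, ← ENNReal.tsum_add]
  congr 1
  funext e
  have h1 : e ∈ G.eps (A ∪ B) ↔ (e ∈ G.eps A ∨ e ∈ G.eps B) := Iff.rfl
  have h2 : e ∈ G.eps (A ∩ B) ↔ (e ∈ G.eps A ∧ e ∈ G.eps B) := Iff.rfl
  by_cases hA : e ∈ G.eps A <;> by_cases hB : e ∈ G.eps B <;>
    simp [h1, h2, hA, hB, add_comm]

variable (hm1 : ∀ A, G.G0 A → m' A ≤ 1)
variable (hm4 : ∀ A B, G.G0 A → G.G0 B → m' (A ∪ B) + m' (A ∩ B) = m' A + m' B)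

include hm1 hm3 hm4 in
lemma dd_union {A B : Set V} (hA : G.G0 A) (hB : G.G0 B) :
    dd G M' m' (A ∪ B) + dd G M' m' (A ∩ B) = dd G M' m' A + dd G M' m' B := by
  have hU : G.G0 (A ∪ B) := Ultragraph.G0.union hA hB
  have hI : G.G0 (A ∩ B) := G0_inter G hA hB
  have hne : mhat G M' m' A + mhat G M' m' B ≠ ⊤ := by
    refine ENNReal.add_ne_top.2 ⟨?_, ?_⟩ <;>
      exact ne_top_of_le_ne_top (by simp) ((mhat_le G M' m' hm3 (by assumption)).trans
        (hm1 _ (by assumption)))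
  refine WithTop.add_right_cancel hne ?_
  calc dd G M' m' (A ∪ B) + dd G M' m' (A ∩ B) + (mhat G M' m' A + mhat G M' m' B)
      = (mhat G M' m' (A ∪ B) + dd G M' m' (A ∪ B))
        + (mhat G M' m' (A ∩ B) + dd G M' m' (A ∩ B)) := by
        rw [← mhat_union G M' m' A B]; ring
    _ = m' (A ∪ B) + m' (A ∩ B) := by
        rw [← m'_eq_mhat_add_dd G M' m' hm3 hU, ← m'_eq_mhat_add_dd G M' m' hm3 hI]
    _ = m' A + m' B := hm4 A B hA hB
    _ = dd G M' m' A + dd G M' m' B + (mhat G M' m' A + mhat G M' m' B) := by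
        rw [m'_eq_mhat_add_dd G M' m' hm3 hA, m'_eq_mhat_add_dd G M' m' hm3 hB]; ring

end ddlemmas

end

end Stmt7Aux
namespace Stmt7Aux
noncomputable section
open ENNReal
open scoped Classical

variable {V E : Type*} (G : Ultragraph V E) (M' : E → ℝ≥0∞) (m' : Set V → ℝ≥0∞)

lemma eps_biUnion (S : Finset (Set V)) (f : Set V → Set V) :
    G.eps (⋃ p ∈ S, f p) = ⋃ p ∈ S, G.eps (f p) := by
  ext e
  simp [Ultragraph.eps]

lemma infinite_emitter_nonempty {A : Set V} (h : (G.eps A).Infinite) : A.Nonempty := by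
  obtain ⟨e, he⟩ := h.nonempty
  exact ⟨G.s e, he⟩

lemma singleton_mie {v : V} (h : (G.eps {v}).Infinite) :
    G.IsMinimalInfiniteEmitter {v} := by
  refine ⟨Ultragraph.G0.vertex v, h, ?_⟩
  intro B hB hsub hinf
  have hne := infinite_emitter_nonempty G hinf
  exact (Set.Nonempty.subset_singleton_iff hne).1 hsub

section ddlemmas2

variable (hm3 : ∀ A, G.G0 A → ∀ F : Finset E, (F : Set E) ⊆ G.eps A →
      ∑ e ∈ F, M' e * m' (G.r e) ≤ m' A)
variable (hm2 : ∀ A, G.G0 A → ∀ hfin : (G.eps A).Finite,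
      m' A = ∑ e ∈ hfin.toFinset, M' e * m' (G.r e))
variable (hm1 : ∀ A, G.G0 A → m' A ≤ 1)
variable (hm4 : ∀ A B, G.G0 A → G.G0 B → m' (A ∪ B) + m' (A ∩ B) = m' A + m' B)

include hm1 hm2 hm3 hm4 in
lemma dd_biUnion (S : Finset (Set V)) (hG0 : ∀ p ∈ S, G.G0 p)
    (hpair : ∀ p ∈ S, ∀ q ∈ S, p ≠ q → (G.eps (p ∩ q)).Finite) :
    G.G0 (⋃ p ∈ S, p) ∧ dd G M' m' (⋃ p ∈ S, p) = ∑ p ∈ S, dd G M' m' p := by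
  induction S using Finset.induction_on with
  | empty =>
    refine ⟨by simpa using Ultragraph.G0.empty, ?_⟩
    simpa using dd_of_finite G M' m' hm2 Ultragraph.G0.empty (by
      have : G.eps (∅ : Set V) = ∅ := by ext e; simp [Ultragraph.eps]
      rw [this]; exact Set.finite_empty)
  | @insert a S ha ih =>
    have hG0' : ∀ p ∈ S, G.G0 p := fun p hp => hG0 p (Finset.mem_insert_of_mem hp)
    have hpair' : ∀ p ∈ S, ∀ q ∈ S, p ≠ q → (G.eps (p ∩ q)).Finite :=
      fun p hp q hq => hpair p (Finset.mem_insert_of_mem hp) q (Finset.mem_insert_of_mem hq)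
    obtain ⟨hUG0, hUdd⟩ := ih hG0' hpair'
    have haG0 : G.G0 a := hG0 a (Finset.mem_insert_self a S)
    have hU : (⋃ p ∈ insert a S, p) = a ∪ ⋃ p ∈ S, p := by
      simp [Finset.set_biUnion_insert]
    have hIfin : (G.eps (a ∩ ⋃ p ∈ S, p)).Finite := by
      have h1 : a ∩ ⋃ p ∈ S, p = ⋃ p ∈ S, (a ∩ p) := by
        rw [Set.inter_iUnion₂]
      rw [h1, eps_biUnion]
      refine Set.Finite.biUnion S.finite_toSet ?_
      intro p hp
      exact hpair a (Finset.mem_insert_self a S) p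
        (Finset.mem_insert_of_mem (by simpa using hp)) (fun h => ha (h ▸ (by simpa using hp)))
    have hIdd : dd G M' m' (a ∩ ⋃ p ∈ S, p) = 0 :=
      dd_of_finite G M' m' hm2 (G0_inter G haG0 hUG0) hIfin
    constructor
    · rw [hU]; exact Ultragraph.G0.union haG0 hUG0
    · rw [hU, Finset.sum_insert ha, ← hUdd]
      have := dd_union G M' m' hm3 hm1 hm4 haG0 hUG0
      rw [hIdd, add_zero] at this
      exact this

include hm1 hm2 hm3 hm4 in
lemma exists_mieAt (hrfum : G.RFUM) (e : E) :
    ∃ P : Finset (Set V),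
      (∀ A, A ∈ P ↔ (G.IsMinimalInfiniteEmitter A ∧ A ⊆ G.r e)) ∧
      dd G M' m' (G.r e) = ∑ A ∈ P, dd G M' m' A := by
  obtain ⟨n, A, hre, hpcs⟩ := hrfum e
  set P₀ : Finset (Set V) := Finset.image A Finset.univ with hP₀
  have hmem₀ : ∀ p, p ∈ P₀ ↔ ∃ i, A i = p := by
    intro p; simp [hP₀]
  have hG0p : ∀ p ∈ P₀, G.G0 p := by
    intro p hp
    obtain ⟨i, rfl⟩ := (hmem₀ p).1 hp
    rcases hpcs i with hmie | ⟨v, hv⟩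
    · exact hmie.1
    · rw [hv]; exact Ultragraph.G0.vertex v
  -- minimality of each piece
  have hmin : ∀ p ∈ P₀, ∀ X, G.G0 X → X ⊆ p → (G.eps X).Infinite → X = p := by
    intro p hp X hX hsub hinf
    obtain ⟨i, rfl⟩ := (hmem₀ p).1 hp
    rcases hpcs i with hmie | ⟨v, hv⟩
    · exact hmie.2.2 X hX hsub hinf
    · rw [hv] at hsub ⊢
      exact (Set.Nonempty.subset_singleton_iff (infinite_emitter_nonempty G hinf)).1 hsub
  have hpair : ∀ p ∈ P₀, ∀ q ∈ P₀, p ≠ q → (G.eps (p ∩ q)).Finite := by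
    intro p hp q hq hne
    by_contra hinf0
    have hinf : (G.eps (p ∩ q)).Infinite := hinf0
    have hXne : (p ∩ q).Nonempty := infinite_emitter_nonempty G hinf
    have hXG0 : G.G0 (p ∩ q) := G0_inter G (hG0p p hp) (hG0p q hq)
    have h1 := hmin p hp _ hXG0 Set.inter_subset_left hinf
    have h2 := hmin q hq _ hXG0 Set.inter_subset_right hinf
    exact hne (h1 ▸ h2)
  have hunion : (⋃ p ∈ P₀, p) = G.r e := by
    rw [hre]
    ext v
    simp only [Set.mem_iUnion]
    constructor
    · rintro ⟨p, hp, hv⟩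
      obtain ⟨i, rfl⟩ := (hmem₀ p).1 hp
      exact ⟨i, hv⟩
    · rintro ⟨i, hv⟩
      exact ⟨A i, (hmem₀ _).2 ⟨i, rfl⟩, hv⟩
  obtain ⟨hUG0, hUdd⟩ := dd_biUnion G M' m' hm3 hm2 hm1 hm4 P₀ hG0p hpair
  rw [hunion] at hUdd
  -- the filtered set
  refine ⟨P₀.filter (fun p => G.IsMinimalInfiniteEmitter p), ?_, ?_⟩
  · intro C
    simp only [Finset.mem_filter]
    constructor
    · rintro ⟨hC, hmie⟩
      refine ⟨hmie, ?_⟩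
      obtain ⟨i, rfl⟩ := (hmem₀ C).1 hC
      rw [hre]; exact Set.subset_iUnion A i
    · rintro ⟨hmie, hsub⟩
      refine ⟨?_, hmie⟩
      -- C is an MIE contained in r e, show it is a piece
      have h1 : G.eps C ⊆ ⋃ i, G.eps (C ∩ A i) := by
        intro f hf
        have : G.s f ∈ C := hf
        have h2 : G.s f ∈ G.r e := hsub this
        rw [hre] at h2
        obtain ⟨i, hi⟩ := Set.mem_iUnion.1 h2
        exact Set.mem_iUnion.2 ⟨i, ⟨this, hi⟩⟩
      have h2 : ∃ i, (G.eps (C ∩ A i)).Infinite := by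
        by_contra hall
        push_neg at hall
        exact hmie.2.1 ((Set.finite_iUnion hall).subset h1)
      obtain ⟨i, hi⟩ := h2
      have hiG0 : G.G0 (A i) := hG0p (A i) ((hmem₀ _).2 ⟨i, rfl⟩)
      have hXG0 : G.G0 (C ∩ A i) := G0_inter G hmie.1 hiG0
      have h3 : C ∩ A i = C := hmie.2.2 _ hXG0 Set.inter_subset_left hi
      have h4 : C ⊆ A i := by rw [← h3]; exact Set.inter_subset_right
      have h5 : C = A i := hmin (A i) ((hmem₀ _).2 ⟨i, rfl⟩) C hmie.1 h4 hmie.2.1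
      rw [h5]
      exact (hmem₀ _).2 ⟨i, rfl⟩
  · rw [hUdd]
    refine (Finset.sum_subset (Finset.filter_subset _ _) ?_).symm
    intro p hp hnp
    simp only [Finset.mem_filter, hp, true_and] at hnp
    obtain ⟨i, rfl⟩ := (hmem₀ p).1 hp
    rcases hpcs i with hmie | ⟨v, hv⟩
    · exact absurd hmie hnp
    · rw [hv] at hnp ⊢
      have hfin : (G.eps {v}).Finite := by
        by_contra hinf0
        exact hnp (singleton_mie G hinf0)
      exact dd_of_finite G M' m' hm2 (Ultragraph.G0.vertex v) hfin

end ddlemmas2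
end
end Stmt7Aux
namespace Stmt7Aux
noncomputable section
open ENNReal
open scoped Classical

variable {V E : Type*} (G : Ultragraph V E) (M' : E → ℝ≥0∞) (m' : Set V → ℝ≥0∞)

/-- `α` is a path strictly extending `β` through `B ∖ F` -/
def Ext (β : List E) (B : Set V) (F : Set E) (α : List E) : Prop :=
  G.IsPath α ∧ β.length < α.length ∧ α.take β.length = β ∧
    ∃ e, α[β.length]? = some e ∧ G.s e ∈ B ∧ e ∉ F

variable (β : List E) (B : Set V) (F : Set E)

lemma ext_ne_nil {α : List E} (h : Ext G β B F α) : α ≠ [] := by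
  have := h.2.1
  intro hnil
  rw [hnil] at this
  simp at this

/-- level-`ℓ` tail sum -/
def TT (ℓ : ℕ) : ℝ≥0∞ :=
  ∑' α : List E, if Ext G β B F α ∧ α.length = ℓ then MM M' α * m' (rlast G α) else 0

/-- level-`ℓ` defect sum -/
def DDl (ℓ : ℕ) : ℝ≥0∞ :=
  ∑' α : List E, if Ext G β B F α ∧ α.length = ℓ then MM M' α * dd G M' m' (rlast G α) else 0

lemma ext_concat {α : List E} (e : E) (hlen : β.length < α.length) :
    Ext G β B F (α ++ [e]) ↔ Ext G β B F α ∧ G.s e ∈ rlast G α := by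
  have hne : α ≠ [] := by intro h; rw [h] at hlen; simp at hlen
  have hrl : rlast G α = G.r (α.getLast hne) := rlast_of_ne_nil G hne
  have htk : (α ++ [e]).take β.length = α.take β.length :=
    List.take_append_of_le_length (le_of_lt hlen)
  have hge : (α ++ [e])[β.length]? = α[β.length]? := by
    rw [List.getElem?_append, if_pos hlen]
  constructor
  · rintro ⟨hpath, -, htake, f, hget, hf⟩
    rw [Ultragraph.IsPath, List.Chain', List.isChain_append] at hpath
    obtain ⟨hp1, -, hp3⟩ := hpath
    have hchain : G.s e ∈ G.r (α.getLast hne) :=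
      hp3 _ (by rw [List.getLast?_eq_getLast hne]; rfl) e rfl
    rw [htk] at htake
    rw [hge] at hget
    exact ⟨⟨hp1, hlen, htake, f, hget, hf⟩, by rw [hrl]; exact hchain⟩
  · rintro ⟨⟨hpath, -, htake, f, hget, hf⟩, hmem⟩
    refine ⟨?_, ?_, ?_, f, ?_, hf⟩
    · rw [Ultragraph.IsPath, List.Chain', List.isChain_append]
      refine ⟨hpath, List.isChain_singleton _, ?_⟩
      intro x hx y hy
      rw [List.getLast?_eq_getLast hne] at hx
      simp only [List.head?_cons, Option.mem_def, Option.some.injEq] at hx hy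
      rw [← hx, ← hy]
      rw [hrl] at hmem; exact hmem
    · rw [List.length_append]; simp only [List.length_singleton]; omega
    · rw [htk]; exact htake
    · rw [hge]; exact hget

lemma TT_succ
    (hm3 : ∀ A, G.G0 A → ∀ F : Finset E, (F : Set E) ⊆ G.eps A →
      ∑ e ∈ F, M' e * m' (G.r e) ≤ m' A)
    {ℓ : ℕ} (hℓ : β.length < ℓ) :
    TT G M' m' β B F ℓ = TT G M' m' β B F (ℓ + 1) + DDl G M' m' β B F ℓ := by
  have hstep1 : TT G M' m' β B F ℓ
      = (∑' α : List E, if Ext G β B F α ∧ α.length = ℓ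
          then MM M' α * mhat G M' m' (rlast G α) else 0) + DDl G M' m' β B F ℓ := by
    rw [TT, DDl, ← ENNReal.tsum_add]
    congr 1; funext α
    by_cases h : Ext G β B F α ∧ α.length = ℓ
    · rw [if_pos h, if_pos h, if_pos h]
      have hne : α ≠ [] := ext_ne_nil G β B F h.1
      rw [rlast_of_ne_nil G hne,
        m'_eq_mhat_add_dd G M' m' hm3 (Ultragraph.G0.range _), mul_add]
    · rw [if_neg h, if_neg h, if_neg h, add_zero]
  rw [hstep1]
  congr 1
  -- TT (ℓ+1) equals the mhat-sum
  have hinj : Function.Injective (fun p : List E × E => p.1 ++ [p.2]) := by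
    rintro ⟨a, e⟩ ⟨b, f⟩ h
    simp only at h
    have h1 : a = b := by
      have := congrArg List.dropLast h
      simpa [List.dropLast_concat] using this
    have h2 : e = f := by
      have := congrArg List.getLast? h
      simpa [List.getLast?_concat] using this
    simp [h1, h2]
  have hsupp : Function.support (fun α : List E =>
      if Ext G β B F α ∧ α.length = ℓ + 1 then MM M' α * m' (rlast G α) else 0)
      ⊆ Set.range (fun p : List E × E => p.1 ++ [p.2]) := by
    intro α hα
    simp only [Function.mem_support, ne_eq, ite_eq_right_iff, not_forall] at hα
    obtain ⟨⟨hx, -⟩, -⟩ := hα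
    have hne : α ≠ [] := ext_ne_nil G β B F hx
    exact ⟨(α.dropLast, α.getLast hne), List.dropLast_append_getLast hne⟩
  rw [TT, ← Function.Injective.tsum_eq hinj hsupp, ENNReal.tsum_prod']
  refine tsum_congr (fun α => Eq.symm ?_)
  by_cases h : Ext G β B F α ∧ α.length = ℓ
  · have hαβ : β.length < α.length := by omega
    have hcond : ∀ e : E, (Ext G β B F (α ++ [e]) ∧ (α ++ [e]).length = ℓ + 1)
        ↔ G.s e ∈ rlast G α := by
      intro e
      rw [List.length_append]
      simp only [List.length_singleton]
      constructor
      · rintro ⟨hx, -⟩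
        exact ((ext_concat G β B F e hαβ).1 hx).2
      · intro he
        exact ⟨(ext_concat G β B F e hαβ).2 ⟨h.1, he⟩, by omega⟩
    have hpt : ∀ e : E, (if Ext G β B F (α ++ [e]) ∧ (α ++ [e]).length = ℓ + 1
        then MM M' (α ++ [e]) * m' (rlast G (α ++ [e])) else 0)
        = MM M' α * (if e ∈ G.eps (rlast G α) then M' e * m' (G.r e) else 0) := by
      intro e
      simp only [Ultragraph.eps, Set.mem_setOf_eq]
      by_cases he : G.s e ∈ rlast G α
      · rw [if_pos ((hcond e).2 he), if_pos he, rlast_concat, MM_concat]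
        ring
      · rw [if_neg (fun hc => he ((hcond e).1 hc)), if_neg he, mul_zero]
    calc (∑' e : E, if Ext G β B F (α ++ [e]) ∧ (α ++ [e]).length = ℓ + 1
            then MM M' (α ++ [e]) * m' (rlast G (α ++ [e])) else 0)
        = ∑' e : E, MM M' α * (if e ∈ G.eps (rlast G α) then M' e * m' (G.r e) else 0) :=
          tsum_congr hpt
      _ = MM M' α * mhat G M' m' (rlast G α) := by rw [ENNReal.tsum_mul_left]; rfl
      _ = _ := by rw [if_pos h]
  · rw [if_neg h]
    refine ENNReal.tsum_eq_zero.2 (fun e => ?_)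
    rw [if_neg]
    rintro ⟨hx, hlen⟩
    rw [List.length_append] at hlen
    simp only [List.length_singleton] at hlen
    have hαβ : β.length < α.length := by
      have := hx.2.1
      rw [List.length_append] at this
      simp only [List.length_singleton] at this
      omega
    exact h ⟨((ext_concat G β B F e hαβ).1 hx).1, by omega⟩

lemma TT_telescope
    (hm3 : ∀ A, G.G0 A → ∀ F : Finset E, (F : Set E) ⊆ G.eps A →
      ∑ e ∈ F, M' e * m' (G.r e) ≤ m' A) (K : ℕ) :
    TT G M' m' β B F (β.length + 1)
      = (∑ k ∈ Finset.range K, DDl G M' m' β B F (β.length + 1 + k))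
        + TT G M' m' β B F (β.length + 1 + K) := by
  induction K with
  | zero => simp
  | succ K ih =>
    rw [ih, TT_succ G M' m' β B F hm3 (ℓ := β.length + 1 + K) (by omega),
      Finset.sum_range_succ]
    have : β.length + 1 + K + 1 = β.length + 1 + (K + 1) := by omega
    rw [this]
    ring

lemma TT_limit
    (hm3 : ∀ A, G.G0 A → ∀ F : Finset E, (F : Set E) ⊆ G.eps A →
      ∑ e ∈ F, M' e * m' (G.r e) ≤ m' A) :
    TT G M' m' β B F (β.length + 1)
      = (∑' k : ℕ, DDl G M' m' β B F (β.length + 1 + k))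
        + ⨅ K : ℕ, TT G M' m' β B F (β.length + 1 + K) := by
  have hant : Antitone (fun K : ℕ => TT G M' m' β B F (β.length + 1 + K)) := by
    refine antitone_nat_of_succ_le (fun K => ?_)
    have : β.length + 1 + (K + 1) = (β.length + 1 + K) + 1 := by omega
    rw [this, TT_succ G M' m' β B F hm3 (ℓ := β.length + 1 + K) (by omega)]
    exact le_self_add
  have h1 : Filter.Tendsto (fun K : ℕ => TT G M' m' β B F (β.length + 1 + K))
      Filter.atTop (nhds (⨅ K : ℕ, TT G M' m' β B F (β.length + 1 + K))) :=
    tendsto_atTop_iInf hant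
  have h2 : Filter.Tendsto
      (fun K : ℕ => ∑ k ∈ Finset.range K, DDl G M' m' β B F (β.length + 1 + k))
      Filter.atTop (nhds (∑' k : ℕ, DDl G M' m' β B F (β.length + 1 + k))) :=
    ENNReal.tendsto_nat_tsum _
  have h3 := h2.add h1
  have h4 : (fun K : ℕ =>
      (∑ k ∈ Finset.range K, DDl G M' m' β B F (β.length + 1 + k))
        + TT G M' m' β B F (β.length + 1 + K))
      = fun _ : ℕ => TT G M' m' β B F (β.length + 1) := by
    funext K
    exact (TT_telescope G M' m' β B F hm3 K).symm
  rw [h4] at h3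
  exact tendsto_nhds_unique tendsto_const_nhds h3

lemma tsum_DDl :
    (∑' k : ℕ, DDl G M' m' β B F (β.length + 1 + k))
      = ∑' α : List E, if Ext G β B F α then MM M' α * dd G M' m' (rlast G α) else 0 := by
  simp only [DDl]
  rw [ENNReal.tsum_comm]
  refine tsum_congr (fun α => ?_)
  by_cases h : Ext G β B F α
  · rw [if_pos h]
    have hlen : β.length < α.length := h.2.1
    have huniq : ∀ k : ℕ, (Ext G β B F α ∧ α.length = β.length + 1 + k)
        ↔ k = α.length - (β.length + 1) := by
      intro k
      constructor
      · rintro ⟨-, hk⟩; omega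
      · intro hk; exact ⟨h, by omega⟩
    calc (∑' k : ℕ, if Ext G β B F α ∧ α.length = β.length + 1 + k
            then MM M' α * dd G M' m' (rlast G α) else 0)
        = ∑' k : ℕ, if k = α.length - (β.length + 1)
            then MM M' α * dd G M' m' (rlast G α) else 0 := by
          refine tsum_congr (fun k => ?_)
          by_cases hk : k = α.length - (β.length + 1)
          · rw [if_pos hk, if_pos ((huniq k).2 hk)]
          · rw [if_neg hk, if_neg (fun hc => hk ((huniq k).1 hc))]
      _ = MM M' α * dd G M' m' (rlast G α) := tsum_ite_eq _ _
  · refine Eq.trans (ENNReal.tsum_eq_zero.2 (fun k => ?_)) (by rw [if_neg h])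
    rw [if_neg (fun hc => h hc.1)]

end
end Stmt7Aux
namespace Stmt7Aux
noncomputable section
open ENNReal
open scoped Classical

variable {V E : Type*} (G : Ultragraph V E) (M' : E → ℝ≥0∞) (m' : Set V → ℝ≥0∞)

lemma kap_eq_start
    (hM1 : ∀ e, M' e ≤ 1)
    (hm1 : ∀ A, G.G0 A → m' A ≤ 1)
    (hm3 : ∀ A, G.G0 A → ∀ F : Finset E, (F : Set E) ⊆ G.eps A →
      ∑ e ∈ F, M' e * m' (G.r e) ≤ m' A)
    (β : List E) (B : Set V) (F₀ : Finset E)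
    (hval : G.IsUPath β B) (hFsub : (F₀ : Set E) ⊆ G.eps B) :
    MM M' β * (m' B - ∑ e ∈ F₀, M' e * m' (G.r e))
      = MM M' β * dd G M' m' B + TT G M' m' β B (↑F₀) (β.length + 1) := by
  have hG0B : G.G0 B := hval.2.1
  set Srest : ℝ≥0∞ := ∑' e : E, if G.s e ∈ B ∧ e ∉ F₀ then M' e * m' (G.r e) else 0
    with hSrest
  have hpt : ∀ e : E, (if e ∈ G.eps B then M' e * m' (G.r e) else 0)
      = (if e ∈ F₀ then M' e * m' (G.r e) else 0)
        + (if G.s e ∈ B ∧ e ∉ F₀ then M' e * m' (G.r e) else 0) := by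
    intro e
    by_cases hF : e ∈ F₀
    · rw [if_pos hF, if_pos (hFsub hF), if_neg (fun hc => hc.2 hF), add_zero]
    · rw [if_neg hF]
      by_cases hB : e ∈ G.eps B
      · rw [if_pos hB, if_pos ⟨hB, hF⟩, zero_add]
      · rw [if_neg hB, if_neg (fun hc => hB hc.1), zero_add]
  have h1 : mhat G M' m' B = (∑ e ∈ F₀, M' e * m' (G.r e)) + Srest := by
    have ha : mhat G M' m' B
        = (∑' e : E, if e ∈ F₀ then M' e * m' (G.r e) else 0) + Srest := by
      rw [mhat, hSrest, ← ENNReal.tsum_add]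
      exact tsum_congr hpt
    rw [ha]
    congr 1
    rw [tsum_eq_sum (s := F₀) (fun e he => if_neg he)]
    exact Finset.sum_congr rfl (fun e he => if_pos he)
  have hFne : (∑ e ∈ F₀, M' e * m' (G.r e)) ≠ ⊤ := by
    refine (ENNReal.sum_lt_top.2 (fun e _ => ?_)).ne
    calc M' e * m' (G.r e) ≤ 1 * 1 :=
          mul_le_mul' (hM1 e) (hm1 _ (Ultragraph.G0.range e))
      _ < ⊤ := by simp
  have h3 : m' B - ∑ e ∈ F₀, M' e * m' (G.r e) = Srest + dd G M' m' B := by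
    rw [m'_eq_mhat_add_dd G M' m' hm3 hG0B, h1]
    rw [add_assoc, ENNReal.add_sub_cancel_left hFne]
  have h4 : TT G M' m' β B (↑F₀) (β.length + 1) = MM M' β * Srest := by
    rw [TT]
    have hinj : Function.Injective (fun e : E => β ++ [e]) := by
      intro e f h
      simpa using List.append_cancel_left h
    have hsupp : Function.support (fun α : List E =>
        if Ext G β B (↑F₀) α ∧ α.length = β.length + 1
          then MM M' α * m' (rlast G α) else 0)
        ⊆ Set.range (fun e : E => β ++ [e]) := by
      intro α hα
      simp only [Function.mem_support, ne_eq, ite_eq_right_iff, not_forall] at hα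
      obtain ⟨⟨hx, hlen⟩, -⟩ := hα
      have hlt : β.length < α.length := hx.2.1
      have hdrop : α.drop β.length = [α[β.length]] := by
        rw [List.drop_eq_getElem_cons hlt]
        congr 1
        refine List.eq_nil_of_length_eq_zero ?_
        rw [List.length_drop]
        omega
      refine ⟨α[β.length], ?_⟩
      conv_rhs => rw [← List.take_append_drop β.length α]
      rw [hdrop, hx.2.2.1]
    have hcond : ∀ e : E, (Ext G β B (↑F₀) (β ++ [e]) ∧ (β ++ [e]).length = β.length + 1)
        ↔ (G.s e ∈ B ∧ e ∉ F₀) := by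
      intro e
      constructor
      · rintro ⟨⟨-, -, -, f, hget, hf1, hf2⟩, -⟩
        have : (β ++ [e])[β.length]? = some e := by
          rw [List.getElem?_append_right (le_refl _)]
          simp
        rw [this] at hget
        obtain rfl : f = e := by injection hget.symm
        exact ⟨hf1, fun h => hf2 (Finset.mem_coe.2 h)⟩
      · rintro ⟨he1, he2⟩
        refine ⟨⟨?_, ?_, List.take_left, e, ?_, he1, fun h => he2 (Finset.mem_coe.1 h)⟩, ?_⟩
        · by_cases hβ : β = []
          · subst hβ; simp [Ultragraph.IsPath, List.Chain']
          · rw [Ultragraph.IsPath, List.Chain', List.isChain_append]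
            refine ⟨hval.1, List.isChain_singleton _, ?_⟩
            intro x hx y hy
            rw [List.getLast?_eq_getLast hβ] at hx
            simp only [List.head?_cons, Option.mem_def, Option.some.injEq] at hx hy
            rw [← hx, ← hy]
            exact hval.2.2.2 hβ he1
        · rw [List.length_append]; simp
        · rw [List.getElem?_append_right (le_refl _)]; simp
        · rw [List.length_append]; simp
    rw [← Function.Injective.tsum_eq hinj hsupp, hSrest, ← ENNReal.tsum_mul_left]
    refine tsum_congr (fun e => ?_)
    by_cases he : G.s e ∈ B ∧ e ∉ F₀
    · rw [if_pos ((hcond e).2 he), if_pos he, MM_concat, rlast_concat]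
      ring
    · rw [if_neg (fun hc => he ((hcond e).1 hc)), if_neg he, mul_zero]
  rw [h3, mul_add, h4]
  ring

/-- existence of an infinite path extending a finite path -/
lemma exists_inf_ext (hns : G.NoSinks) {α : List E} (hα : G.IsPath α) (hne : α ≠ []) :
    ∃ γ : ℕ → E, G.IsPt (Ultragraph.Pt.inf γ) ∧ ∀ k, ∀ h : k < α.length, γ k = α[k] := by
  have hnext : ∀ e : E, ∃ f : E, G.s f ∈ G.r e := fun e => by
    obtain ⟨v, hv⟩ := G.r_nonempty e
    obtain ⟨f, hf⟩ := hns v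
    exact ⟨f, by rw [hf]; exact hv⟩
  choose g hg using hnext
  have hlen0 : 0 < α.length := List.length_pos_iff.2 hne
  let γ : ℕ → E := fun n => Nat.rec (α.head hne)
    (fun k ih => if k + 1 < α.length then α.getD (k+1) (α.head hne) else g ih) n
  have hγ : ∀ k, ∀ h : k < α.length, γ k = α[k] := by
    intro k h
    cases k with
    | zero =>
      show α.head hne = α[0]
      exact (List.getElem_zero hlen0).symm
    | succ k =>
      show (if k + 1 < α.length then α.getD (k+1) (α.head hne) else g (γ k)) = α[k+1]
      rw [if_pos h, List.getD_eq_getElem α _ h]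
  refine ⟨γ, ?_, hγ⟩
  show ∀ n, G.s (γ (n + 1)) ∈ G.r (γ n)
  intro n
  by_cases h : n + 1 < α.length
  · rw [hγ _ h, hγ n (by omega)]
    have := List.isChain_iff_getElem.1 hα n (by omega)
    simpa [List.get_eq_getElem] using this
  · have : γ (n+1) = g (γ n) := by
      show (if n + 1 < α.length then α.getD (n+1) (α.head hne) else g (γ n)) = g (γ n)
      rw [if_neg h]
    rw [this]
    exact hg (γ n)

lemma fin_match_iff_take {γ : ℕ → E} {α β' : List E}
    (hmatch : ∀ k, ∀ h : k < α.length, γ k = α[k]) (hlen : β'.length ≤ α.length) :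
    (∀ i : Fin β'.length, γ i = β'.get i) ↔ α.take β'.length = β' := by
  constructor
  · intro h
    refine List.ext_getElem (by rw [List.length_take]; omega) ?_
    intro i hi1 hi2
    rw [List.getElem_take, ← hmatch i (by omega)]
    exact h ⟨i, hi2⟩
  · intro h i
    have h3 := congrArg (fun l => l[i.1]?) h
    simp only [List.getElem?_take, i.2, if_pos] at h3
    rw [List.getElem?_eq_getElem i.2] at h3
    obtain ⟨hlt, heq⟩ := List.getElem?_eq_some_iff.1 h3
    rw [hmatch i.1 (by omega), List.get_eq_getElem]
    exact heq

lemma inf_mem_iff {γ : ℕ → E} {α : List E}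
    (hmatch : ∀ k, ∀ h : k < α.length, γ k = α[k])
    (hpath : G.IsPath α) {β' : List E} {B' : Set V} {F' : Set E}
    (hlen : β'.length < α.length) :
    G.inDF β' B' F' (Ultragraph.Pt.inf γ) ↔ Ext G β' B' F' α := by
  show ((∀ i : Fin β'.length, γ i = β'.get i) ∧ G.s (γ β'.length) ∈ B' ∧ γ β'.length ∉ F')
    ↔ _
  have hg : γ β'.length = α[β'.length] := hmatch _ hlen
  rw [fin_match_iff_take hmatch (le_of_lt hlen), hg]
  constructor
  · rintro ⟨h1, h2, h3⟩
    exact ⟨hpath, hlen, h1, α[β'.length], List.getElem?_eq_getElem hlen, h2, h3⟩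
  · rintro ⟨-, -, htake, e, hget, he1, he2⟩
    obtain ⟨hlt, hgete⟩ := List.getElem?_eq_some_iff.1 hget
    exact ⟨htake, hgete ▸ he1, hgete ▸ he2⟩

lemma inDF_fin_iff {α β' : List E} {A B' : Set V} {F' : Set E} :
    G.inDF β' B' F' (Ultragraph.Pt.fin α A) ↔
      (α = β' ∧ A = B') ∨ (β'.length < α.length ∧ α.take β'.length = β' ∧
        ∃ e, α[β'.length]? = some e ∧ G.s e ∈ B' ∧ e ∉ F') := by
  show ((α = β' ∧ A = B') ∨ (α.take β'.length = β' ∧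
      ∃ e, (α.drop β'.length).head? = some e ∧ G.s e ∈ B' ∧ e ∉ F')) ↔ _
  rw [List.head?_drop]
  constructor
  · rintro (h | ⟨h1, e, h2, h3⟩)
    · exact Or.inl h
    · exact Or.inr ⟨(List.getElem?_eq_some_iff.1 h2).1, h1, e, h2, h3⟩
  · rintro (h | ⟨-, h1, e, h2, h3⟩)
    · exact Or.inl h
    · exact Or.inr ⟨h1, e, h2, h3⟩

lemma ext_iff_inDF_fin {α β' : List E} {A B' : Set V} {F' : Set E} (hαβ : α ≠ β')
    (hpath : G.IsPath α) :
    G.inDF β' B' F' (Ultragraph.Pt.fin α A) ↔ Ext G β' B' F' α := by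
  rw [inDF_fin_iff]
  constructor
  · rintro (⟨h, -⟩ | ⟨h1, h2, h3⟩)
    · exact absurd h hαβ
    · exact ⟨hpath, h1, h2, h3⟩
  · rintro ⟨-, h1, h2, h3⟩
    exact Or.inr ⟨h1, h2, h3⟩

lemma isPt_fin_iff {α : List E} {A : Set V} :
    G.IsPt (Ultragraph.Pt.fin α A) ↔ (G.IsPath α ∧ G.IsMinimalInfiniteEmitter A ∧
      ∀ h : α ≠ [], A ⊆ G.r (α.getLast h)) := Iff.rfl

/-- the fin-point weight sum identity -/
lemma FW_eq
    (hm2 : ∀ A, G.G0 A → ∀ hfin : (G.eps A).Finite,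
      m' A = ∑ e ∈ hfin.toFinset, M' e * m' (G.r e))
    (mieAt : E → Finset (Set V))
    (hmie1 : ∀ e A, A ∈ mieAt e ↔ (G.IsMinimalInfiniteEmitter A ∧ A ⊆ G.r e))
    (hmie2 : ∀ e, dd G M' m' (G.r e) = ∑ A ∈ mieAt e, dd G M' m' A)
    (𝒜 : List E → Finset (Set V))
    (h𝒜 : ∀ (α : List E) (h : α ≠ []), mieAt (α.getLast h) ⊆ 𝒜 α)
    (β : List E) (B : Set V) (F₀ : Finset E)
    (hval : G.ValidCyl β B F₀) (hB𝒜 : B ∈ 𝒜 β) :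
    (∑' α : List E, ∑ A ∈ 𝒜 α,
        if G.IsPt (Ultragraph.Pt.fin α A) ∧ G.inDF β B (↑F₀) (Ultragraph.Pt.fin α A)
          then MM M' α * dd G M' m' A else 0)
      = MM M' β * dd G M' m' B
        + ∑' α : List E, if Ext G β B (↑F₀) α
            then MM M' α * dd G M' m' (rlast G α) else 0 := by
  have hconst : MM M' β * dd G M' m' B
      = ∑' α : List E, if α = β then MM M' β * dd G M' m' B else 0 :=
    (tsum_ite_eq β (fun _ => MM M' β * dd G M' m' B)).symm
  rw [hconst, ← ENNReal.tsum_add]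
  refine tsum_congr (fun α => ?_)
  by_cases hαβ : α = β
  · subst hαβ
    rw [if_pos rfl, if_neg (fun h => lt_irrefl _ h.2.1), add_zero]
    by_cases hpt : G.IsPt (Ultragraph.Pt.fin α B)
    · have hAcond : ∀ A : Set V,
          (G.IsPt (Ultragraph.Pt.fin α A) ∧ G.inDF α B (↑F₀) (Ultragraph.Pt.fin α A)) ↔ A = B := by
        intro A
        constructor
        · rintro ⟨-, hm⟩
          rcases (inDF_fin_iff G).1 hm with ⟨-, h⟩ | ⟨h, -⟩
          · exact h
          · exact absurd h (lt_irrefl _)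
        · rintro rfl
          exact ⟨hpt, (inDF_fin_iff G).2 (Or.inl ⟨rfl, rfl⟩)⟩
      calc (∑ A ∈ 𝒜 α, if G.IsPt (Ultragraph.Pt.fin α A) ∧ G.inDF α B (↑F₀) (Ultragraph.Pt.fin α A)
              then MM M' α * dd G M' m' A else 0)
          = ∑ A ∈ 𝒜 α, if A = B then MM M' α * dd G M' m' A else 0 := by
            refine Finset.sum_congr rfl (fun A _ => ?_)
            by_cases hA : A = B
            · rw [if_pos ((hAcond A).2 hA), if_pos hA]
            · rw [if_neg (fun hc => hA ((hAcond A).1 hc)), if_neg hA]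
        _ = MM M' α * dd G M' m' B := by
            rw [Finset.sum_ite_eq' (𝒜 α) B]
            rw [if_pos hB𝒜]
    · have hBnotmie : ¬ G.IsMinimalInfiniteEmitter B := by
        intro hmie
        exact hpt ⟨hval.1.1, hmie, fun h => hval.1.2.2.2 h⟩
      have hddB : dd G M' m' B = 0 := by
        rcases hval.2 with ⟨hmie, -⟩ | ⟨hfin, -⟩
        · exact absurd hmie hBnotmie
        · exact dd_of_finite G M' m' hm2 hval.1.2.1 hfin
      rw [hddB, mul_zero]
      refine Finset.sum_eq_zero (fun A _ => ?_)
      rw [if_neg]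
      rintro ⟨hpt', hm⟩
      rcases (inDF_fin_iff G).1 hm with ⟨-, hAB⟩ | ⟨h, -⟩
      · exact hpt (hAB ▸ hpt')
      · exact absurd h (lt_irrefl _)
  · rw [if_neg hαβ, zero_add]
    by_cases hext : Ext G β B (↑F₀) α
    · have hne : α ≠ [] := ext_ne_nil G β B (↑F₀) hext
      rw [if_pos hext]
      have hAcond : ∀ A : Set V,
          (G.IsPt (Ultragraph.Pt.fin α A) ∧ G.inDF β B (↑F₀) (Ultragraph.Pt.fin α A))
            ↔ A ∈ mieAt (α.getLast hne) := by
        intro A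
        rw [ext_iff_inDF_fin G hαβ hext.1, hmie1]
        constructor
        · rintro ⟨hpt, -⟩
          exact ⟨hpt.2.1, hpt.2.2 hne⟩
        · rintro ⟨hmie, hsub⟩
          exact ⟨⟨hext.1, hmie, fun _ => hsub⟩, hext⟩
      calc (∑ A ∈ 𝒜 α, if G.IsPt (Ultragraph.Pt.fin α A) ∧ G.inDF β B (↑F₀) (Ultragraph.Pt.fin α A)
              then MM M' α * dd G M' m' A else 0)
          = ∑ A ∈ 𝒜 α, if A ∈ mieAt (α.getLast hne) then MM M' α * dd G M' m' A else 0 := by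
            refine Finset.sum_congr rfl (fun A _ => ?_)
            by_cases hA : A ∈ mieAt (α.getLast hne)
            · rw [if_pos ((hAcond A).2 hA), if_pos hA]
            · rw [if_neg (fun hc => hA ((hAcond A).1 hc)), if_neg hA]
        _ = ∑ A ∈ mieAt (α.getLast hne), MM M' α * dd G M' m' A := by
            rw [Finset.sum_ite_mem, Finset.inter_eq_right.2 (h𝒜 α hne)]
        _ = MM M' α * dd G M' m' (rlast G α) := by
            rw [← Finset.mul_sum, ← hmie2, rlast_of_ne_nil G hne]
    · rw [if_neg hext]
      refine Finset.sum_eq_zero (fun A _ => ?_)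
      rw [if_neg]
      rintro ⟨hpt, hm⟩
      exact hext ((ext_iff_inDF_fin G hαβ hpt.1).1 hm)

end
end Stmt7Aux
open Stmt7Aux
open scoped ENNReal

/-- Under (m2'), (m3'), (m4'), the premeasure
`κ(D_{(β,B),F}) = M(β) m(B) − ∑_{e ∈ F} M(βe) m(r(e))` is finitely additive on the
semi-ring of generalized cylinder sets: if `D_{(β,B),F}` is a finite disjoint union of
cylinders `D_{(βᵢ,Bᵢ),Fᵢ}` then `κ(D_{(β,B),F}) = ∑ᵢ κ(D_{(βᵢ,Bᵢ),Fᵢ})`. -/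
theorem stmt7 {V E : Type*} [Countable V] [Countable E] (G : Ultragraph V E)
    (hns : G.NoSinks) (hrfum : G.RFUM)
    (M : E → ℝ) (hM : ∀ e, M e ∈ Set.Icc (0 : ℝ) 1)
    (m : Set V → ℝ) (hm : ∀ A, G.G0 A → m A ∈ Set.Icc (0 : ℝ) 1)
    (hm2 : ∀ A, G.G0 A → ∀ hfin : (G.eps A).Finite,
      m A = ∑ e ∈ hfin.toFinset, M e * m (G.r e))
    (hm3 : ∀ A, G.G0 A → ∀ F : Finset E, (F : Set E) ⊆ G.eps A →
      ∑ e ∈ F, M e * m (G.r e) ≤ m A)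
    (hm4 : ∀ A B, G.G0 A → G.G0 B → m (A ∪ B) = m A + m B - m (A ∩ B))
    (β : List E) (B : Set V) (F : Finset E) (hval : G.ValidCyl β B F)
    (n : ℕ) (βi : Fin n → List E) (Bi : Fin n → Set V) (Fi : Fin n → Finset E)
    (hvali : ∀ i, G.ValidCyl (βi i) (Bi i) (Fi i))
    (hdisj : ∀ i j, i ≠ j →
      Disjoint (G.DF (βi i) (Bi i) (Fi i)) (G.DF (βi j) (Bi j) (Fi j)))
    (hcover : G.DF β B (F : Set E) = ⋃ i, G.DF (βi i) (Bi i) (Fi i)) :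
    G.kappaForm M m β B F = ∑ i, G.kappaForm M m (βi i) (Bi i) (Fi i) := by
  classical
  -- ENNReal versions of the data
  set M' : E → ℝ≥0∞ := fun e => ENNReal.ofReal (M e) with hM'
  set m' : Set V → ℝ≥0∞ := fun A => ENNReal.ofReal (m A) with hm'
  have hM'1 : ∀ e, M' e ≤ 1 := fun e => ENNReal.ofReal_le_one.2 (hM e).2
  have hm'1 : ∀ A, G.G0 A → m' A ≤ 1 := fun A hA => ENNReal.ofReal_le_one.2 (hm A hA).2
  have hterm : ∀ e, ENNReal.ofReal (M e * m (G.r e)) = M' e * m' (G.r e) := fun e =>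
    ENNReal.ofReal_mul (hM e).1
  have htermnn : ∀ (e : E), 0 ≤ M e * m (G.r e) := fun e =>
    mul_nonneg (hM e).1 (hm _ (Ultragraph.G0.range e)).1
  have hsum : ∀ (s : Finset E), ENNReal.ofReal (∑ e ∈ s, M e * m (G.r e))
      = ∑ e ∈ s, M' e * m' (G.r e) := by
    intro s
    rw [ENNReal.ofReal_sum_of_nonneg (fun e _ => htermnn e)]
    exact Finset.sum_congr rfl (fun e _ => hterm e)
  have hm'2 : ∀ A, G.G0 A → ∀ hfin : (G.eps A).Finite,
      m' A = ∑ e ∈ hfin.toFinset, M' e * m' (G.r e) := by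
    intro A hA hfin
    rw [hm']
    simp only
    rw [hm2 A hA hfin, hsum]
  have hm'3 : ∀ A, G.G0 A → ∀ F' : Finset E, (F' : Set E) ⊆ G.eps A →
      ∑ e ∈ F', M' e * m' (G.r e) ≤ m' A := by
    intro A hA F' hF'
    rw [← hsum]
    exact ENNReal.ofReal_le_ofReal (hm3 A hA F' hF')
  have hm'4 : ∀ A B', G.G0 A → G.G0 B' → m' (A ∪ B') + m' (A ∩ B') = m' A + m' B' := by
    intro A B' hA hB'
    have hI : G.G0 (A ∩ B') := G0_inter G hA hB'
    have hU : G.G0 (A ∪ B') := Ultragraph.G0.union hA hB'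
    rw [hm']
    simp only
    rw [← ENNReal.ofReal_add (hm _ hU).1 (hm _ hI).1,
      ← ENNReal.ofReal_add (hm _ hA).1 (hm _ hB').1]
    congr 1
    have := hm4 A B' hA hB'
    linarith
  -- minimal infinite emitters inside ranges
  choose mieAt hmie1 hmie2 using
    fun e => exists_mieAt G M' m' hm'3 hm'2 hm'1 hm'4 hrfum e
  -- ambient finite family of vertex sets
  set 𝒜 : List E → Finset (Set V) := fun α =>
    (if h : α ≠ [] then mieAt (α.getLast h) else ∅)
      ∪ (insert B (Finset.image Bi Finset.univ)) with h𝒜def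
  have h𝒜 : ∀ (α : List E) (h : α ≠ []), mieAt (α.getLast h) ⊆ 𝒜 α := by
    intro α h A hA
    apply Finset.mem_union_left
    rw [dif_pos h]
    exact hA
  have hB𝒜 : ∀ α, B ∈ 𝒜 α := fun α =>
    Finset.mem_union_right _ (Finset.mem_insert_self _ _)
  have hBi𝒜 : ∀ α i, Bi i ∈ 𝒜 α := fun α i =>
    Finset.mem_union_right _ (Finset.mem_insert_of_mem
      (Finset.mem_image_of_mem _ (Finset.mem_univ i)))
  -- the key per-cylinder identity
  have hkey : ∀ (β' : List E) (B' : Set V) (F' : Finset E), G.ValidCyl β' B' F' →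
      B' ∈ 𝒜 β' →
      MM M' β' * (m' B' - ∑ e ∈ F', M' e * m' (G.r e))
        = (∑' α : List E, ∑ A ∈ 𝒜 α,
            if G.IsPt (Ultragraph.Pt.fin α A) ∧ G.inDF β' B' (↑F') (Ultragraph.Pt.fin α A)
              then MM M' α * dd G M' m' A else 0)
          + ⨅ K : ℕ, TT G M' m' β' B' (↑F') (β'.length + 1 + K) := by
    intro β' B' F' hv hB'
    have hFsub : (F' : Set E) ⊆ G.eps B' := by
      rcases hv.2 with ⟨-, h⟩ | ⟨-, h⟩
      · exact h
      · rw [h]; simp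
    rw [kap_eq_start G M' m' hM'1 hm'1 hm'3 β' B' F' hv.1 hFsub,
      TT_limit G M' m' β' B' (↑F') hm'3,
      tsum_DDl G M' m' β' B' (↑F'),
      FW_eq G M' m' hm'2 mieAt hmie1 hmie2 𝒜 h𝒜 β' B' F' hv hB']
    ring
  -- membership consequences of the cover and disjointness
  have hcov : ∀ x : G.SSp, G.inDF β B (↑F) x.val ↔
      ∃ i, G.inDF (βi i) (Bi i) (↑(Fi i)) x.val := by
    intro x
    have h1 : x ∈ G.DF β B (↑F) ↔ x ∈ ⋃ i, G.DF (βi i) (Bi i) (↑(Fi i)) := by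
      rw [hcover]
    simpa [Ultragraph.DF, Set.mem_iUnion] using h1
  have hdis : ∀ x : G.SSp, ∀ i j, i ≠ j → G.inDF (βi i) (Bi i) (↑(Fi i)) x.val →
      G.inDF (βi j) (Bi j) (↑(Fi j)) x.val → False := by
    intro x i j hij h1 h2
    exact Set.disjoint_left.1 (hdisj i j hij) h1 h2
  -- generic indicator splitting
  have hindicator : ∀ (P : Fin n → Prop) (Q : Prop), (Q ↔ ∃ i, P i) →
      (∀ i j, i ≠ j → P i → P j → False) → ∀ (c : ℝ≥0∞),
      (if Q then c else 0) = ∑ i, (if P i then c else 0) := by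
    intro P Q hPQ huniq c
    by_cases hQ : Q
    · obtain ⟨i0, hi0⟩ := hPQ.1 hQ
      rw [if_pos hQ,
        Finset.sum_eq_single_of_mem i0 (Finset.mem_univ _)
          (fun j _ hj => if_neg (fun hPj => huniq j i0 hj hPj hi0)),
        if_pos hi0]
    · rw [if_neg hQ]
      exact (Finset.sum_eq_zero (fun i _ => if_neg
        (fun hPi => hQ (hPQ.2 ⟨i, hPi⟩)))).symm
  -- additivity of the fin-point part
  have hFWadd :
      (∑' α : List E, ∑ A ∈ 𝒜 α,
          if G.IsPt (Ultragraph.Pt.fin α A) ∧ G.inDF β B (↑F) (Ultragraph.Pt.fin α A)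
            then MM M' α * dd G M' m' A else 0)
        = ∑ i, (∑' α : List E, ∑ A ∈ 𝒜 α,
            if G.IsPt (Ultragraph.Pt.fin α A) ∧
                G.inDF (βi i) (Bi i) (↑(Fi i)) (Ultragraph.Pt.fin α A)
              then MM M' α * dd G M' m' A else 0) := by
    rw [← Summable.tsum_finsetSum (fun i _ => ENNReal.summable)]
    refine tsum_congr (fun α => ?_)
    rw [Finset.sum_comm]
    refine Finset.sum_congr rfl (fun A _ => ?_)
    by_cases hpt : G.IsPt (Ultragraph.Pt.fin α A)
    · have e1 : ∀ (P : Prop), (if G.IsPt (Ultragraph.Pt.fin α A) ∧ P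
          then MM M' α * dd G M' m' A else 0) = (if P then MM M' α * dd G M' m' A else 0) := by
        intro P
        by_cases hP : P
        · rw [if_pos ⟨hpt, hP⟩, if_pos hP]
        · rw [if_neg (fun hc => hP hc.2), if_neg hP]
      rw [e1]
      have e2 : ∀ i, (if G.IsPt (Ultragraph.Pt.fin α A) ∧
          G.inDF (βi i) (Bi i) (↑(Fi i)) (Ultragraph.Pt.fin α A)
            then MM M' α * dd G M' m' A else 0)
          = (if G.inDF (βi i) (Bi i) (↑(Fi i)) (Ultragraph.Pt.fin α A)
            then MM M' α * dd G M' m' A else 0) := fun i => e1 _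
      rw [Finset.sum_congr rfl (fun i _ => e2 i)]
      exact hindicator _ _ (hcov ⟨Ultragraph.Pt.fin α A, hpt⟩)
        (fun i j hij => hdis ⟨Ultragraph.Pt.fin α A, hpt⟩ i j hij) _
    · rw [if_neg (fun hc => hpt hc.1)]
      exact (Finset.sum_eq_zero (fun i _ => if_neg (fun hc => hpt hc.1))).symm
  -- additivity of the tail sums at high levels
  set N₀ : ℕ := max β.length (Finset.univ.sup fun i => (βi i).length) with hN₀
  have hβN : β.length ≤ N₀ := le_max_left _ _
  have hβiN : ∀ i, (βi i).length ≤ N₀ := by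
    intro i
    rw [hN₀]
    refine le_trans ?_ (le_max_right _ _)
    exact Finset.le_sup (f := fun i => (βi i).length) (Finset.mem_univ i)
  have hTTadd : ∀ ℓ : ℕ, N₀ < ℓ →
      TT G M' m' β B (↑F) ℓ = ∑ i, TT G M' m' (βi i) (Bi i) (↑(Fi i)) ℓ := by
    intro ℓ hℓ
    simp only [TT]
    rw [← Summable.tsum_finsetSum (fun i _ => ENNReal.summable)]
    refine tsum_congr (fun α => ?_)
    by_cases hA : G.IsPath α ∧ α.length = ℓ
    · obtain ⟨hpath, hlen⟩ := hA
      have hne : α ≠ [] := by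
        intro h
        rw [h] at hlen
        simp at hlen
        omega
      obtain ⟨γ, hγpt, hγm⟩ := exists_inf_ext G hns hpath hne
      have hxmem : ∀ (β'' : List E) (B'' : Set V) (F'' : Set E), β''.length ≤ N₀ →
          (G.inDF β'' B'' F'' (Ultragraph.Pt.inf γ) ↔ Ext G β'' B'' F'' α) := by
        intro β'' B'' F'' hβ''
        exact inf_mem_iff G hγm hpath (by omega)
      have hQ : Ext G β B (↑F) α ↔ ∃ i, Ext G (βi i) (Bi i) (↑(Fi i)) α := by
        rw [← hxmem β B (↑F) hβN]
        rw [hcov ⟨Ultragraph.Pt.inf γ, hγpt⟩]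
        exact exists_congr (fun i => hxmem (βi i) (Bi i) (↑(Fi i)) (hβiN i))
      have huniq : ∀ i j, i ≠ j → Ext G (βi i) (Bi i) (↑(Fi i)) α →
          Ext G (βi j) (Bi j) (↑(Fi j)) α → False := by
        intro i j hij h1 h2
        exact hdis ⟨Ultragraph.Pt.inf γ, hγpt⟩ i j hij
          ((hxmem (βi i) (Bi i) (↑(Fi i)) (hβiN i)).2 h1)
          ((hxmem (βi j) (Bi j) (↑(Fi j)) (hβiN j)).2 h2)
      have e2 : ∀ (P : Prop) (c : ℝ≥0∞), (if P ∧ α.length = ℓ then c else 0)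
          = (if P then c else 0) := by
        intro P c
        by_cases hP : P
        · rw [if_pos ⟨hP, hlen⟩, if_pos hP]
        · rw [if_neg (fun hc => hP hc.1), if_neg hP]
      rw [e2]
      rw [Finset.sum_congr rfl (fun i _ => e2 (Ext G (βi i) (Bi i) (↑(Fi i)) α) _)]
      exact hindicator _ _ hQ huniq _
    · have hno : ∀ (β'' : List E) (B'' : Set V) (F'' : Set E),
          ¬ (Ext G β'' B'' F'' α ∧ α.length = ℓ) := by
        rintro β'' B'' F'' ⟨hx, hl⟩
        exact hA ⟨hx.1, hl⟩
      rw [if_neg (hno β B (↑F))]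
      exact (Finset.sum_eq_zero (fun i _ => if_neg (hno (βi i) (Bi i) (↑(Fi i))))).symm
  -- limits of the tails
  have htend : ∀ (β' : List E) (B' : Set V) (F' : Set E), β'.length ≤ N₀ →
      Filter.Tendsto (fun K : ℕ => TT G M' m' β' B' F' (N₀ + 1 + K)) Filter.atTop
        (nhds (⨅ K : ℕ, TT G M' m' β' B' F' (β'.length + 1 + K))) := by
    intro β' B' F' hβ'
    have hant : Antitone (fun K : ℕ => TT G M' m' β' B' F' (β'.length + 1 + K)) := by
      refine antitone_nat_of_succ_le (fun K => ?_)
      have h1 : β'.length + 1 + (K + 1) = (β'.length + 1 + K) + 1 := by omega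
      rw [h1, TT_succ G M' m' β' B' F' hm'3 (ℓ := β'.length + 1 + K) (by omega)]
      exact le_self_add
    have h0 : Filter.Tendsto (fun K : ℕ => TT G M' m' β' B' F' (β'.length + 1 + K))
        Filter.atTop (nhds (⨅ K : ℕ, TT G M' m' β' B' F' (β'.length + 1 + K))) :=
      tendsto_atTop_iInf hant
    have h1 := h0.comp (Filter.tendsto_add_atTop_nat (N₀ - β'.length))
    have h2 : ((fun K : ℕ => TT G M' m' β' B' F' (β'.length + 1 + K)) ∘
        (fun K : ℕ => K + (N₀ - β'.length)))
        = fun K : ℕ => TT G M' m' β' B' F' (N₀ + 1 + K) := by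
      funext K
      simp only [Function.comp_apply]
      congr 1
      omega
    rwa [h2] at h1
  have hνadd : (⨅ K : ℕ, TT G M' m' β B (↑F) (β.length + 1 + K))
      = ∑ i, ⨅ K : ℕ, TT G M' m' (βi i) (Bi i) (↑(Fi i)) ((βi i).length + 1 + K) := by
    have hC := htend β B (↑F) hβN
    have hCi := fun i => htend (βi i) (Bi i) (↑(Fi i)) (hβiN i)
    have hsum := tendsto_finset_sum (Finset.univ : Finset (Fin n)) (fun i _ => hCi i)
    have heq : (fun K : ℕ => ∑ i, TT G M' m' (βi i) (Bi i) (↑(Fi i)) (N₀ + 1 + K))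
        = fun K : ℕ => TT G M' m' β B (↑F) (N₀ + 1 + K) := by
      funext K
      exact (hTTadd (N₀ + 1 + K) (by omega)).symm
    rw [heq] at hsum
    exact tendsto_nhds_unique hC hsum
  -- the ENNReal identity
  have hEN : MM M' β * (m' B - ∑ e ∈ F, M' e * m' (G.r e))
      = ∑ i, MM M' (βi i) * (m' (Bi i) - ∑ e ∈ Fi i, M' e * m' (G.r e)) := by
    rw [hkey β B F hval (hB𝒜 β), hFWadd, hνadd, ← Finset.sum_add_distrib]
    exact Finset.sum_congr rfl (fun i _ => (hkey (βi i) (Bi i) (Fi i) (hvali i)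
      (hBi𝒜 (βi i) i)).symm)
  -- back to the reals
  have hMext : ∀ l : List E, MM M' l = ENNReal.ofReal (Ultragraph.Mext M l) := by
    intro l
    induction l with
    | nil => simp [MM, Ultragraph.Mext]
    | cons e l ih =>
      have h1 : Ultragraph.Mext M (e :: l) = M e * Ultragraph.Mext M l := by
        simp [Ultragraph.Mext]
      have h2 : MM M' (e :: l) = M' e * MM M' l := by
        simp [MM]
      rw [h1, h2, ih, ENNReal.ofReal_mul (hM e).1]
  have hMextnn : ∀ l : List E, 0 ≤ Ultragraph.Mext M l := by
    intro l
    refine List.prod_nonneg ?_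
    intro x hx
    obtain ⟨e, -, rfl⟩ := List.mem_map.1 hx
    exact (hM e).1
  have hfact : ∀ (β' : List E) (B' : Set V) (F' : Finset E),
      G.kappaForm M m β' B' F'
        = Ultragraph.Mext M β' * (m B' - ∑ e ∈ F', M e * m (G.r e)) := by
    intro β' B' F'
    rw [Ultragraph.kappaForm, mul_sub, Finset.mul_sum]
    congr 1
    exact Finset.sum_congr rfl (fun e _ => by ring)
  have hsuble : ∀ (β' : List E) (B' : Set V) (F' : Finset E), G.ValidCyl β' B' F' →
      ∑ e ∈ F', M e * m (G.r e) ≤ m B' := by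
    intro β' B' F' hv
    refine hm3 B' hv.1.2.1 F' ?_
    rcases hv.2 with ⟨-, h⟩ | ⟨-, h⟩
    · exact h
    · rw [h]; simp
  have hofReal : ∀ (β' : List E) (B' : Set V) (F' : Finset E), G.ValidCyl β' B' F' →
      ENNReal.ofReal (G.kappaForm M m β' B' F')
        = MM M' β' * (m' B' - ∑ e ∈ F', M' e * m' (G.r e)) := by
    intro β' B' F' hv
    rw [hfact, ENNReal.ofReal_mul (hMextnn β'),
      ENNReal.ofReal_sub _ (Finset.sum_nonneg (fun e _ => htermnn e)),
      hsum, hMext]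
  have hkapnn : ∀ (β' : List E) (B' : Set V) (F' : Finset E), G.ValidCyl β' B' F' →
      0 ≤ G.kappaForm M m β' B' F' := by
    intro β' B' F' hv
    rw [hfact]
    exact mul_nonneg (hMextnn β') (sub_nonneg.2 (hsuble β' B' F' hv))
  have hfinal : ENNReal.ofReal (G.kappaForm M m β B F)
      = ENNReal.ofReal (∑ i, G.kappaForm M m (βi i) (Bi i) (Fi i)) := by
    rw [hofReal β B F hval, hEN,
      ENNReal.ofReal_sum_of_nonneg (fun i _ => hkapnn _ _ _ (hvali i))]
    exact Finset.sum_congr rfl (fun i _ => (hofReal _ _ _ (hvali i)).symm)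
  have := (ENNReal.ofReal_eq_ofReal_iff (hkapnn β B F hval)
    (Finset.sum_nonneg (fun i _ => hkapnn _ _ _ (hvali i)))).1 hfinal
  exact this
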